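/- Let α ∈ ℝ, let σ be the exponential linear unit σ(x) = α(e^x − 1) for x ≤ 0 and σ(x) = x for x > 0, set γ := max{1 + 4|α|, 2 + |α|}, and define B(x,h) := (σ(x + h) − 2σ(x) + σ(x − h))/γ. Let 𝔅 : ℝⁿ → ℝ be the n-fold composition 𝔅(x₁) := B(x₁,1), 𝔅(x₁,…,x_n) := B(x_n, 𝔅(x₁,…,x_{n−1})). Then ∫_{ℝⁿ} |𝔅(x)| dx ≤ 1; in particular 𝔅 ∈ L¹(ℝⁿ). -/
import Mathlib

open MeasureTheory Real Set


noncomputable def elu (α : ℝ) (x : ℝ) : ℝ := if x ≤ 0 then α * (Real.exp x - 1) else x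

lemma elu_measurable (α : ℝ) : Measurable (elu α) := by
  unfold elu
  exact Measurable.ite (measurableSet_le measurable_id measurable_const)
    (by fun_prop) measurable_id

lemma elu_lip (α : ℝ) (a b : ℝ) : |elu α a - elu α b| ≤ max 1 |α| * |a - b| := by
  have key : ∀ a b : ℝ, a ≤ b → |elu α a - elu α b| ≤ max 1 |α| * |a - b| := by
    intro a b hab
    have hM1 : (1:ℝ) ≤ max 1 |α| := le_max_left _ _
    have hM2 : |α| ≤ max 1 |α| := le_max_right _ _
    have hM0 : (0:ℝ) ≤ max 1 |α| := by linarith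
    have habs : |a - b| = b - a := by rw [abs_of_nonpos (by linarith)]; ring
    rw [habs]
    unfold elu
    rcases le_or_gt b 0 with hb | hb
    · have ha : a ≤ 0 := hab.trans hb
      rw [if_pos ha, if_pos hb]
      have heq : α * (Real.exp a - 1) - α * (Real.exp b - 1) = α * (Real.exp a - Real.exp b) := by ring
      rw [heq, abs_mul]
      have hexp : Real.exp b - Real.exp a ≤ b - a := by
        have h1 := Real.add_one_le_exp (a - b)
        have hb1 : Real.exp b ≤ 1 := Real.exp_le_one_iff.2 hb
        have h2 : Real.exp a = Real.exp b * Real.exp (a - b) := by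
          rw [← Real.exp_add]; ring_nf
        have h3 : Real.exp (a - b) ≤ 1 := Real.exp_le_one_iff.2 (by linarith)
        nlinarith [Real.exp_pos b, Real.exp_pos (a - b)]
      have hmono : Real.exp a ≤ Real.exp b := Real.exp_le_exp.2 hab
      rw [abs_of_nonpos (by linarith : Real.exp a - Real.exp b ≤ 0)]
      have : -(Real.exp a - Real.exp b) ≤ b - a := by linarith
      nlinarith [abs_nonneg α]
    · rcases le_or_gt a 0 with ha | ha
      · rw [if_pos ha, if_neg (not_le.2 hb)]
        have hea : Real.exp a ≤ 1 := Real.exp_le_one_iff.2 ha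
        have h2 : 1 - Real.exp a ≤ -a := by have := Real.add_one_le_exp a; linarith
        have htri : |α * (Real.exp a - 1) - b| ≤ |α| * (1 - Real.exp a) + b := by
          have h4 : |α * (Real.exp a - 1)| = |α| * (1 - Real.exp a) := by
            rw [abs_mul, abs_of_nonpos (by linarith : Real.exp a - 1 ≤ 0)]; ring
          calc |α * (Real.exp a - 1) - b| ≤ |α * (Real.exp a - 1)| + |b| := abs_sub _ _
            _ = |α| * (1 - Real.exp a) + b := by rw [h4, abs_of_pos hb]
        have h5 : |α| * (1 - Real.exp a) ≤ max 1 |α| * (-a) := by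
          apply mul_le_mul hM2 h2 (by linarith) hM0
        have h6 : b ≤ max 1 |α| * b := le_mul_of_one_le_left hb.le hM1
        nlinarith
      · rw [if_neg (not_le.2 ha), if_neg (not_le.2 hb)]
        rw [abs_of_nonpos (by linarith : a - b ≤ 0)]
        nlinarith
  rcases le_total a b with h | h
  · exact key a b h
  · rw [abs_sub_comm, abs_sub_comm a b]; exact key b a h


lemma poly_int (c1 c0 a b : ℝ) :
    ∫ x in a..b, (c1 * x + c0) = c1 * (b^2 - a^2)/2 + c0 * (b - a) := by
  have h1 : IntervalIntegrable (fun x : ℝ => c1 * x) volume a b := by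
    apply Continuous.intervalIntegrable; continuity
  rw [intervalIntegral.integral_add h1 intervalIntegrable_const,
    intervalIntegral.integral_const_mul, integral_id, intervalIntegral.integral_const]
  simp [smul_eq_mul]; ring

lemma g_abs_le (α h : ℝ) (x : ℝ) :
    |elu α (x+h) - 2*elu α x + elu α (x-h)| ≤ 2 * max 1 |α| * |h| := by
  have h1 := elu_lip α (x+h) x
  have h2 := elu_lip α x (x-h)
  have e1 : |x + h - x| = |h| := by rw [show x + h - x = h by ring]
  have e2 : |x - (x - h)| = |h| := by rw [show x - (x - h) = h by ring]
  rw [e1] at h1; rw [e2] at h2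
  calc |elu α (x+h) - 2*elu α x + elu α (x-h)|
      = |(elu α (x+h) - elu α x) - (elu α x - elu α (x-h))| := by ring_nf
    _ ≤ |elu α (x+h) - elu α x| + |elu α x - elu α (x-h)| := abs_sub _ _
    _ ≤ 2 * max 1 |α| * |h| := by linarith

lemma g_int (α h : ℝ) (hh0 : 0 ≤ h) :
    Integrable (fun x => elu α (x+h) - 2*elu α x + elu α (x-h)) ∧
    (∫ x, |elu α (x+h) - 2*elu α x + elu α (x-h)|) ≤ (1 + 4*|α|) * h^2 := by
  set g : ℝ → ℝ := fun x => elu α (x+h) - 2*elu α x + elu α (x-h) with hg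
  have mg : Measurable g := by
    apply Measurable.add
    apply Measurable.sub
    · exact (elu_measurable α).comp (measurable_id.add_const h)
    · exact (measurable_const.mul (elu_measurable α))
    · exact (elu_measurable α).comp (measurable_id.sub_const h)
  -- values on pieces
  have hA : ∀ x ∈ Iic (-h), g x = (α * (Real.exp h + Real.exp (-h) - 2)) * Real.exp x := by
    intro x hx
    simp only [mem_Iic] at hx
    have hx0 : x ≤ 0 := le_trans hx (by linarith)
    have h1 : x + h ≤ 0 := by linarith
    have h2 : x - h ≤ 0 := by linarith
    simp only [hg, elu, if_pos hx0, if_pos h1, if_pos h2]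
    rw [show x + h = h + x by ring, show x - h = -h + x by ring, Real.exp_add, Real.exp_add]
    ring
  have hB : ∀ x ∈ Ioc (-h) 0, |g x| ≤ (1 - 3*|α|) * x + (1 + |α|) * h := by
    intro x hx
    simp only [mem_Ioc] at hx
    obtain ⟨hx1, hx2⟩ := hx
    have h1 : ¬ (x + h ≤ 0) := by intro hc; linarith
    have h2 : x - h ≤ 0 := by linarith
    simp only [hg, elu, if_pos hx2, if_neg h1, if_pos h2]
    have e1 : 1 - Real.exp x ≤ -x := by have := Real.add_one_le_exp x; linarith
    have e1' : 0 ≤ 1 - Real.exp x := by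
      have := Real.exp_le_one_iff.2 hx2; linarith
    have e2 : 1 - Real.exp (x - h) ≤ -(x - h) := by
      have := Real.add_one_le_exp (x - h); linarith
    have e2' : 0 ≤ 1 - Real.exp (x - h) := by
      have := Real.exp_le_one_iff.2 h2; linarith
    have key : |x + h - 2 * (α * (Real.exp x - 1)) + α * (Real.exp (x - h) - 1)|
        ≤ (x + h) + 2 * |α| * (1 - Real.exp x) + |α| * (1 - Real.exp (x - h)) := by
      have t1 : |x + h - 2 * (α * (Real.exp x - 1)) + α * (Real.exp (x - h) - 1)|
          ≤ |x + h| + |2 * (α * (Real.exp x - 1))| + |α * (Real.exp (x - h) - 1)| := by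
        calc |x + h - 2 * (α * (Real.exp x - 1)) + α * (Real.exp (x - h) - 1)|
            ≤ |x + h - 2 * (α * (Real.exp x - 1))| + |α * (Real.exp (x - h) - 1)| := abs_add_le _ _
          _ ≤ |x + h| + |2 * (α * (Real.exp x - 1))| + |α * (Real.exp (x - h) - 1)| := by
              have := abs_sub (x + h) (2 * (α * (Real.exp x - 1))); linarith
      have t2 : |x + h| = x + h := abs_of_nonneg (by linarith)
      have t3 : |2 * (α * (Real.exp x - 1))| = 2 * |α| * (1 - Real.exp x) := by
        rw [abs_mul, abs_mul, abs_of_nonpos (by linarith : Real.exp x - 1 ≤ 0)]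
        simp [abs_of_nonneg]; ring
      have t4 : |α * (Real.exp (x - h) - 1)| = |α| * (1 - Real.exp (x - h)) := by
        rw [abs_mul, abs_of_nonpos (by linarith : Real.exp (x - h) - 1 ≤ 0)]; ring
      rw [t2, t3, t4] at t1; exact t1
    have h5 : 2 * |α| * (1 - Real.exp x) ≤ 2 * |α| * (-x) := by
      apply mul_le_mul_of_nonneg_left e1 (by positivity)
    have h6 : |α| * (1 - Real.exp (x - h)) ≤ |α| * (h - x) := by
      have : -(x - h) = h - x := by ring
      rw [this] at e2
      apply mul_le_mul_of_nonneg_left e2 (abs_nonneg _)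
    rw [show (1 - 3*|α|) * x + (1 + |α|) * h = (x + h) + 2 * |α| * (-x) + |α| * (h - x) by ring]
    linarith
  have hC : ∀ x ∈ Ioc 0 h, |g x| ≤ (-(1 + |α|)) * x + (1 + |α|) * h := by
    intro x hx
    simp only [mem_Ioc] at hx
    obtain ⟨hx1, hx2⟩ := hx
    have hx0 : ¬ (x ≤ 0) := not_le.2 hx1
    have h1 : ¬ (x + h ≤ 0) := by intro hc; linarith
    have h2 : x - h ≤ 0 := by linarith
    simp only [hg, elu, if_neg hx0, if_neg h1, if_pos h2]
    have e2 : 1 - Real.exp (x - h) ≤ h - x := by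
      have := Real.add_one_le_exp (x - h); linarith
    have e2' : 0 ≤ 1 - Real.exp (x - h) := by
      have := Real.exp_le_one_iff.2 h2; linarith
    have t4 : |α * (Real.exp (x - h) - 1)| = |α| * (1 - Real.exp (x - h)) := by
      rw [abs_mul, abs_of_nonpos (by linarith : Real.exp (x - h) - 1 ≤ 0)]; ring
    calc |x + h - 2 * x + α * (Real.exp (x - h) - 1)|
        ≤ |x + h - 2 * x| + |α * (Real.exp (x - h) - 1)| := abs_add_le _ _
      _ ≤ (h - x) + |α| * (h - x) := by
          rw [t4, show x + h - 2*x = h - x by ring, abs_of_nonneg (by linarith : (0:ℝ) ≤ h - x)]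
          have : |α| * (1 - Real.exp (x - h)) ≤ |α| * (h - x) :=
            mul_le_mul_of_nonneg_left e2 (abs_nonneg _)
          linarith
      _ = (-(1 + |α|)) * x + (1 + |α|) * h := by ring
  have hD : ∀ x ∈ Ioi h, g x = 0 := by
    intro x hx
    simp only [mem_Ioi] at hx
    have hx0 : ¬ (x ≤ 0) := by intro hc; linarith
    have h1 : ¬ (x + h ≤ 0) := by intro hc; linarith
    have h2 : ¬ (x - h ≤ 0) := by intro hc; simp only [sub_nonpos] at hc; linarith
    simp only [hg, elu, if_neg hx0, if_neg h1, if_neg h2]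
    ring
  -- integrability on pieces
  have iA : IntegrableOn g (Iic (-h)) := by
    have base : IntegrableOn (fun x => (α * (Real.exp h + Real.exp (-h) - 2)) * Real.exp x)
        (Iic (-h)) := (integrableOn_exp_Iic (-h)).const_mul _
    exact base.congr_fun (fun x hx => (hA x hx).symm) measurableSet_Iic
  have iB : IntegrableOn g (Ioc (-h) 0) := by
    apply Measure.integrableOn_of_bounded measure_Ioc_lt_top.ne mg.aestronglyMeasurable
    filter_upwards with x
    exact le_trans (g_abs_le α h x) (by rw [abs_of_nonneg hh0])
  have iC : IntegrableOn g (Ioc 0 h) := by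
    apply Measure.integrableOn_of_bounded measure_Ioc_lt_top.ne mg.aestronglyMeasurable
    filter_upwards with x
    exact le_trans (g_abs_le α h x) (by rw [abs_of_nonneg hh0])
  have iD : IntegrableOn g (Ioi h) :=
    (integrableOn_congr_fun hD measurableSet_Ioi).2 (integrableOn_zero)
  have huniv : (univ : Set ℝ) = Iic (-h) ∪ (Ioc (-h) 0 ∪ (Ioc 0 h ∪ Ioi h)) := by
    ext x
    simp only [mem_univ, mem_union, mem_Iic, mem_Ioc, mem_Ioi, true_iff]
    rcases le_or_gt x (-h) with h1 | h1
    · exact Or.inl h1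
    rcases le_or_gt x 0 with h2 | h2
    · exact Or.inr (Or.inl ⟨h1, h2⟩)
    rcases le_or_gt x h with h3 | h3
    · exact Or.inr (Or.inr (Or.inl ⟨h2, h3⟩))
    · exact Or.inr (Or.inr (Or.inr h3))
  have hint : Integrable g := by
    rw [← integrableOn_univ, huniv]
    exact iA.union (iB.union (iC.union iD))
  refine ⟨hint, ?_⟩
  -- split the integral
  have habs : Integrable (fun x => |g x|) := hint.abs
  have d1 : Disjoint (Iic (-h)) (Ioc (-h) 0 ∪ (Ioc 0 h ∪ Ioi h)) := by
    rw [Set.disjoint_left]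
    intro x hx hx'
    simp only [mem_Iic] at hx
    simp only [mem_union, mem_Ioc, mem_Ioi] at hx'
    rcases hx' with ⟨a, _⟩ | ⟨a, _⟩ | a <;> linarith
  have d2 : Disjoint (Ioc (-h) 0) (Ioc 0 h ∪ Ioi h) := by
    rw [Set.disjoint_left]
    intro x hx hx'
    simp only [mem_Ioc] at hx
    simp only [mem_union, mem_Ioc, mem_Ioi] at hx'
    rcases hx' with ⟨a, _⟩ | a <;> linarith
  have d3 : Disjoint (Ioc 0 h) (Ioi h) := by
    rw [Set.disjoint_left]
    intro x hx hx'
    simp only [mem_Ioc] at hx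
    simp only [mem_Ioi] at hx'
    linarith
  have msB : MeasurableSet (Ioc (-h) 0 ∪ (Ioc 0 h ∪ Ioi h)) :=
    measurableSet_Ioc.union (measurableSet_Ioc.union measurableSet_Ioi)
  have split : (∫ x, |g x|) = (∫ x in Iic (-h), |g x|) + ((∫ x in Ioc (-h) 0, |g x|)
      + ((∫ x in Ioc 0 h, |g x|) + (∫ x in Ioi h, |g x|))) := by
    rw [← setIntegral_univ, huniv]
    rw [setIntegral_union d1 msB iA.abs ((iB.union (iC.union iD)).abs)]
    rw [setIntegral_union d2 (measurableSet_Ioc.union measurableSet_Ioi) iB.abs ((iC.union iD).abs)]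
    rw [setIntegral_union d3 measurableSet_Ioi iC.abs iD.abs]
  rw [split]
  -- bound each piece
  have hcoef : 0 ≤ Real.exp h + Real.exp (-h) - 2 := by
    have := Real.add_one_le_exp h
    have := Real.add_one_le_exp (-h)
    linarith
  have bA : (∫ x in Iic (-h), |g x|) ≤ |α| * h^2 := by
    have : (∫ x in Iic (-h), |g x|)
        = (∫ x in Iic (-h), (|α| * (Real.exp h + Real.exp (-h) - 2)) * Real.exp x) := by
      apply setIntegral_congr_fun measurableSet_Iic
      intro x hx
      show |g x| = _
      rw [hA x hx, abs_mul, abs_mul, abs_of_nonneg hcoef, abs_of_nonneg (Real.exp_pos x).le]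
    rw [this, MeasureTheory.integral_const_mul, integral_exp_Iic]
    have hu1 : Real.exp (-h) ≤ 1 := Real.exp_le_one_iff.2 (by linarith)
    have hu2 : 1 - h ≤ Real.exp (-h) := by have := Real.add_one_le_exp (-h); linarith
    have hprod : Real.exp h * Real.exp (-h) = 1 := by
      rw [← Real.exp_add]; simp
    have : (Real.exp h + Real.exp (-h) - 2) * Real.exp (-h) ≤ h^2 := by nlinarith
    calc |α| * (Real.exp h + Real.exp (-h) - 2) * Real.exp (-h)
        = |α| * ((Real.exp h + Real.exp (-h) - 2) * Real.exp (-h)) := by ring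
      _ ≤ |α| * h^2 := mul_le_mul_of_nonneg_left this (abs_nonneg _)
  have contL : ∀ c1 c0 : ℝ, Continuous (fun x : ℝ => c1 * x + c0) := by
    intro c1 c0; exact (continuous_const.mul continuous_id).add continuous_const
  have bB : (∫ x in Ioc (-h) 0, |g x|) ≤ (1/2 + 5/2 * |α|) * h^2 := by
    have step : (∫ x in Ioc (-h) 0, |g x|)
        ≤ ∫ x in Ioc (-h) 0, ((1 - 3*|α|) * x + (1 + |α|) * h) := by
      apply setIntegral_mono_on iB.abs
        ((contL _ _).integrableOn_Ioc) measurableSet_Ioc hB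
    have conv : (∫ x in Ioc (-h) 0, ((1 - 3*|α|) * x + (1 + |α|) * h))
        = ∫ x in (-h)..(0:ℝ), ((1 - 3*|α|) * x + (1 + |α|) * h) := by
      rw [intervalIntegral.integral_of_le (by linarith : -h ≤ (0:ℝ))]
    rw [conv, poly_int] at step
    calc (∫ x in Ioc (-h) 0, |g x|)
        ≤ (1 - 3*|α|) * ((0:ℝ)^2 - (-h)^2)/2 + ((1 + |α|) * h) * (0 - (-h)) := step
      _ = (1/2 + 5/2 * |α|) * h^2 := by ring
  have bC : (∫ x in Ioc 0 h, |g x|) ≤ (1/2 + 1/2 * |α|) * h^2 := by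
    have step : (∫ x in Ioc 0 h, |g x|)
        ≤ ∫ x in Ioc 0 h, ((-(1 + |α|)) * x + (1 + |α|) * h) := by
      apply setIntegral_mono_on iC.abs
        ((contL _ _).integrableOn_Ioc) measurableSet_Ioc hC
    have conv : (∫ x in Ioc 0 h, ((-(1 + |α|)) * x + (1 + |α|) * h))
        = ∫ x in (0:ℝ)..h, ((-(1 + |α|)) * x + (1 + |α|) * h) := by
      rw [intervalIntegral.integral_of_le hh0]
    rw [conv, poly_int] at step
    calc (∫ x in Ioc 0 h, |g x|)
        ≤ (-(1 + |α|)) * (h^2 - (0:ℝ)^2)/2 + ((1 + |α|) * h) * (h - 0) := step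
      _ = (1/2 + 1/2 * |α|) * h^2 := by ring
  have bD : (∫ x in Ioi h, |g x|) = 0 := by
    apply setIntegral_eq_zero_of_forall_eq_zero
    intro x hx
    rw [hD x hx, abs_zero]
  rw [bD]
  nlinarith [sq_nonneg h, abs_nonneg α]


noncomputable def Bc (α γ : ℝ) (x h : ℝ) : ℝ :=
  (elu α (x + h) - 2 * elu α x + elu α (x - h)) / γ

section
variable {α γ : ℝ} (hγ : γ = max (1 + 4 * |α|) (2 + |α|))
include hγ

lemma gamma_pos : 0 < γ := by
  rw [hγ]; have := abs_nonneg α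
  have : (2:ℝ) + |α| ≤ max (1 + 4 * |α|) (2 + |α|) := le_max_right _ _
  linarith

lemma two_lip_le : 2 * max 1 |α| ≤ γ := by
  rw [hγ]
  rcases le_total 1 |α| with h | h
  · rw [max_eq_right h]
    have : (2:ℝ) * |α| ≤ 1 + 4 * |α| := by linarith [abs_nonneg α]
    exact le_trans this (le_max_left _ _)
  · rw [max_eq_left h]
    have : (2:ℝ) * 1 ≤ 2 + |α| := by linarith [abs_nonneg α]
    exact le_trans this (le_max_right _ _)

lemma Bc_abs_le (x h : ℝ) : |Bc α γ x h| ≤ |h| := by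
  have hγ0 := gamma_pos hγ
  have hL := two_lip_le hγ
  have hg := g_abs_le α h x
  rw [Bc, abs_div, abs_of_pos hγ0, div_le_iff₀ hγ0]
  have h2 : 2 * max 1 |α| * |h| ≤ γ * |h| :=
    mul_le_mul_of_nonneg_right hL (abs_nonneg _)
  calc |elu α (x + h) - 2 * elu α x + elu α (x - h)| ≤ 2 * max 1 |α| * |h| := hg
    _ ≤ γ * |h| := h2
    _ = |h| * γ := by ring

lemma Bc_neg (x h : ℝ) : Bc α γ x (-h) = Bc α γ x h := by
  rw [Bc, Bc, show x + -h = x - h by ring, show x - -h = x + h by ring]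
  ring

lemma Bc_measurable : Measurable (fun p : ℝ × ℝ => Bc α γ p.1 p.2) := by
  unfold Bc
  apply Measurable.div _ measurable_const
  apply Measurable.add
  apply Measurable.sub
  · exact (elu_measurable α).comp (measurable_fst.add measurable_snd)
  · exact measurable_const.mul ((elu_measurable α).comp measurable_fst)
  · exact (elu_measurable α).comp (measurable_fst.sub measurable_snd)

lemma Bc_oneD (h : ℝ) (hh : |h| ≤ 1) :
    Integrable (fun x => Bc α γ x h) ∧ (∫ x, |Bc α γ x h|) ≤ |h| := by
  have hγ0 := gamma_pos hγ
  have key : ∀ h' : ℝ, 0 ≤ h' → h' ≤ 1 →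
      Integrable (fun x => Bc α γ x h') ∧ (∫ x, |Bc α γ x h'|) ≤ h' := by
    intro h' h0 h1
    obtain ⟨hint, hbd⟩ := g_int α h' h0
    constructor
    · exact hint.div_const γ
    · have : (fun x => |Bc α γ x h'|)
          = fun x => |elu α (x + h') - 2 * elu α x + elu α (x - h')| / γ := by
        funext x
        rw [Bc, abs_div, abs_of_pos hγ0]
      rw [this, integral_div]
      rw [div_le_iff₀ hγ0]
      have hγge : 1 + 4 * |α| ≤ γ := hγ ▸ le_max_left _ _
      have hsq : h' ^ 2 ≤ h' := by nlinarith
      calc (∫ x, |elu α (x + h') - 2 * elu α x + elu α (x - h')|)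
          ≤ (1 + 4*|α|) * h'^2 := hbd
        _ ≤ γ * h' := by nlinarith [abs_nonneg α]
        _ = h' * γ := by ring
  rcases le_total 0 h with h0 | h0
  · have := key h h0 (by rwa [abs_of_nonneg h0] at hh)
    rwa [abs_of_nonneg h0]
  · have habs : |h| = -h := abs_of_nonpos h0
    have := key (-h) (by linarith) (by rw [habs] at hh; linarith)
    rw [habs]
    constructor
    · have := this.1
      simpa only [Bc_neg hγ] using this
    · have h2 := this.2
      have : (fun x => |Bc α γ x (-h)|) = fun x => |Bc α γ x h| := by
        funext x; rw [Bc_neg hγ]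
      rwa [this] at h2

end

lemma multi_ind (B : ℝ → ℝ → ℝ)
    (hBmeas : Measurable (fun p : ℝ × ℝ => B p.1 p.2))
    (hBabs : ∀ x h : ℝ, |B x h| ≤ |h|)
    (hBint : ∀ h : ℝ, |h| ≤ 1 → Integrable (fun x => B x h) ∧ (∫ x, |B x h|) ≤ |h|)
    (𝓑 : (m : ℕ) → (Fin m → ℝ) → ℝ)
    (h1 : ∀ x : Fin 1 → ℝ, 𝓑 1 x = B (x 0) 1)
    (hstep : ∀ (m : ℕ) (x : Fin (m + 2) → ℝ),
      𝓑 (m + 2) x = B (x (Fin.last (m + 1))) (𝓑 (m + 1) (Fin.init x))) :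
    ∀ m : ℕ, Measurable (𝓑 (m+1)) ∧ (∀ x, |𝓑 (m+1) x| ≤ 1) ∧
      Integrable (𝓑 (m+1)) ∧ (∫ x, |𝓑 (m+1) x|) ≤ 1 := by
  intro m
  induction m with
  | zero =>
    set e : (Fin 1 → ℝ) ≃ᵐ ℝ := MeasurableEquiv.funUnique (Fin 1) ℝ with he
    have mp : MeasurePreserving e := volume_preserving_funUnique (Fin 1) ℝ
    have hfun : ∀ x : Fin 1 → ℝ, 𝓑 1 x = B (e x) 1 := by
      intro x
      rw [h1 x]
      show B (x 0) 1 = B (x default) 1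
      congr 1
    have hcomp : 𝓑 1 = (fun t => B t 1) ∘ e := funext fun x => hfun x
    have hmB1 : Measurable (fun t : ℝ => B t 1) :=
      hBmeas.comp (measurable_id.prodMk measurable_const)
    obtain ⟨hint1, hbd1⟩ := hBint 1 (by norm_num)
    refine ⟨?_, ?_, ?_, ?_⟩
    · rw [hcomp]; exact hmB1.comp e.measurable
    · intro x; rw [h1 x]
      simpa using hBabs (x 0) 1
    · rw [hcomp]
      exact (mp.integrable_comp_emb e.measurableEmbedding).2 hint1
    · have : (∫ x : Fin 1 → ℝ, |𝓑 1 x|) = ∫ t : ℝ, |B t 1| := by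
        rw [hcomp]
        exact mp.integral_comp e.measurableEmbedding (fun t => |B t 1|)
      rw [this]
      simpa using hbd1
  | succ m ih =>
    obtain ⟨ihM, ihP, ihI, ihB⟩ := ih
    set e : (Fin (m+2) → ℝ) ≃ᵐ ℝ × (Fin (m+1) → ℝ) :=
      MeasurableEquiv.piFinSuccAbove (fun _ : Fin (m+2) => ℝ) (Fin.last (m+1)) with he
    have mp : MeasurePreserving e :=
      volume_preserving_piFinSuccAbove (fun _ : Fin (m+2) => ℝ) (Fin.last (m+1))
    set F : ℝ × (Fin (m+1) → ℝ) → ℝ := fun p => B p.1 (𝓑 (m+1) p.2) with hF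
    have hfun : ∀ x : Fin (m+2) → ℝ, 𝓑 (m+2) x = F (e x) := by
      intro x
      rw [hstep m x, hF]
      have h2 : (e x).2 = Fin.init x := by
        funext j
        show x ((Fin.last (m+1)).succAbove j) = x j.castSucc
        rw [Fin.succAbove_last]
      have h1' : (e x).1 = x (Fin.last (m+1)) := rfl
      show B (x (Fin.last (m+1))) (𝓑 (m+1) (Fin.init x)) = B (e x).1 (𝓑 (m+1) (e x).2)
      rw [h2, h1']
    have hcomp : 𝓑 (m+2) = F ∘ e := funext fun x => hfun x
    have hmF : Measurable F :=
      hBmeas.comp (measurable_fst.prodMk (ihM.comp measurable_snd))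
    -- integrability of F on the product
    have hasm : AEStronglyMeasurable F ((volume : Measure ℝ).prod volume) :=
      hmF.aestronglyMeasurable
    have hsm : StronglyMeasurable F := hmF.stronglyMeasurable
    have hnormint : Integrable
        (fun y : Fin (m+1) → ℝ => ∫ t : ℝ, ‖F (t, y)‖) := by
      apply Integrable.mono' ihI.abs
      · exact (hsm.norm.integral_prod_left').aestronglyMeasurable
      · filter_upwards with y
        have hy : |𝓑 (m+1) y| ≤ 1 := ihP y
        have := (hBint (𝓑 (m+1) y) hy).2
        have hnn : 0 ≤ ∫ t : ℝ, ‖F (t, y)‖ := integral_nonneg fun t => norm_nonneg _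
        rw [Real.norm_eq_abs, abs_of_nonneg hnn]
        simpa [hF, Real.norm_eq_abs] using this
    have haeint : ∀ᵐ y : Fin (m+1) → ℝ, Integrable (fun t : ℝ => F (t, y)) := by
      filter_upwards with y
      exact (hBint (𝓑 (m+1) y) (ihP y)).1
    have hFint : Integrable F ((volume : Measure ℝ).prod volume) :=
      (integrable_prod_iff' hasm).2 ⟨haeint, hnormint⟩
    have hFintvol : Integrable F (volume : Measure (ℝ × (Fin (m+1) → ℝ))) := by
      rw [Measure.volume_eq_prod]; exact hFint
    refine ⟨?_, ?_, ?_, ?_⟩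
    · rw [hcomp]; exact hmF.comp e.measurable
    · intro x
      rw [hstep m x]
      exact le_trans (hBabs _ _) (ihP _)
    · rw [hcomp]
      exact (mp.integrable_comp_emb e.measurableEmbedding).2 hFintvol
    · have step1 : (∫ x : Fin (m+2) → ℝ, |𝓑 (m+2) x|) = ∫ p, |F p| := by
        rw [hcomp]
        exact mp.integral_comp e.measurableEmbedding (fun p => |F p|)
      have step2 : (∫ p, |F p| ∂(volume : Measure (ℝ × (Fin (m+1) → ℝ))))
          = ∫ y, ∫ t, |F (t, y)| := by
        rw [Measure.volume_eq_prod]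
        exact integral_prod_symm (fun p => |F p|) hFint.abs
      have hnormint' : Integrable (fun y : Fin (m+1) → ℝ => ∫ t : ℝ, |F (t, y)|) := by
        have : (fun y : Fin (m+1) → ℝ => ∫ t : ℝ, |F (t, y)|)
            = fun y : Fin (m+1) → ℝ => ∫ t : ℝ, ‖F (t, y)‖ := by
          funext y
          congr 1
        rw [this]; exact hnormint
      have step3 : (∫ y, ∫ t, |F (t, y)|) ≤ ∫ y, |𝓑 (m+1) y| := by
        apply integral_mono hnormint' ihI.abs
        intro y
        have := (hBint (𝓑 (m+1) y) (ihP y)).2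
        simpa [hF] using this
      calc (∫ x : Fin (m+2) → ℝ, |𝓑 (m+2) x|) = ∫ p, |F p| := step1
        _ = ∫ y, ∫ t, |F (t, y)| := step2
        _ ≤ ∫ y, |𝓑 (m+1) y| := step3
        _ ≤ 1 := ihB


/-- The `n`-fold composition of the (normalized) ELU `B`-function has `L¹` norm at most `1`
on `ℝⁿ`; in particular it is integrable. -/
theorem stmt_13 (n : ℕ) (hn : 1 ≤ n) (α : ℝ) (σ : ℝ → ℝ)
    (hσ : ∀ x : ℝ, σ x = if x ≤ 0 then α * (Real.exp x - 1) else x)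
    (γ : ℝ) (hγ : γ = max (1 + 4 * |α|) (2 + |α|))
    (B : ℝ → ℝ → ℝ)
    (hB : ∀ x h : ℝ, B x h = (σ (x + h) - 2 * σ x + σ (x - h)) / γ)
    (𝓑 : (m : ℕ) → (Fin m → ℝ) → ℝ)
    (h1 : ∀ x : Fin 1 → ℝ, 𝓑 1 x = B (x 0) 1)
    (hstep : ∀ (m : ℕ) (x : Fin (m + 2) → ℝ),
      𝓑 (m + 2) x = B (x (Fin.last (m + 1))) (𝓑 (m + 1) (Fin.init x))) :
    (∫ x : Fin n → ℝ, |𝓑 n x|) ≤ 1 ∧ Integrable (𝓑 n) := by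
  have hσe : σ = elu α := funext fun x => by rw [hσ]; rfl
  have hB' : ∀ x h : ℝ, B x h = Bc α γ x h := by
    intro x h
    rw [hB, hσe, Bc]
  have hBmeas : Measurable (fun p : ℝ × ℝ => B p.1 p.2) := by
    have : (fun p : ℝ × ℝ => B p.1 p.2) = fun p : ℝ × ℝ => Bc α γ p.1 p.2 :=
      funext fun p => hB' p.1 p.2
    rw [this]
    exact Bc_measurable hγ
  have hBabs : ∀ x h : ℝ, |B x h| ≤ |h| := by
    intro x h
    rw [hB']
    exact Bc_abs_le hγ x h
  have hBint : ∀ h : ℝ, |h| ≤ 1 →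
      Integrable (fun x => B x h) ∧ (∫ x, |B x h|) ≤ |h| := by
    intro h hh
    have := Bc_oneD hγ h hh
    simp only [hB']
    exact this
  have main := multi_ind B hBmeas hBabs hBint 𝓑 h1 hstep
  obtain ⟨m, rfl⟩ : ∃ m, n = m + 1 := ⟨n - 1, by omega⟩
  obtain ⟨_, _, hI, hInt⟩ := main m
  exact ⟨hInt, hI⟩
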